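/- Let G be a connected cubic graph and let φ be a proper 4-edge-colouring of G with colours 0, 1, 2, 3 that minimizes the number of edges coloured 0 among all proper 4-edge-colourings of G with these colours. Let m be the number of edges coloured 0 and, for i ∈ {1,2,3}, let m_i be the number of edges coloured 0 that are adjacent to two edges coloured i. Then m_1 ≡ m_2 ≡ m_3 ≡ m (mod 2). -/

import Mathlib

open SimpleGraph

/-- Two edges (as unordered pairs) are adjacent: distinct and sharing a vertex. -/
def Sym2Adj {V : Type} (e f : Sym2 V) : Prop := e ≠ f ∧ ∃ v, v ∈ e ∧ v ∈ f

/-- A graph is cubic if every vertex has exactly 3 neighbours. -/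
def IsCubic {V : Type} (G : SimpleGraph V) : Prop := ∀ v, Nat.card (G.neighborSet v) = 3

/-- `G` admits a proper 3-edge-colouring. -/
def Colourable3 {V : Type} (G : SimpleGraph V) : Prop :=
  ∃ c : G.edgeSet → Fin 3, ∀ e f : G.edgeSet, Sym2Adj (e : Sym2 V) (f : Sym2 V) → c e ≠ c f

/-- A snark: a connected cubic graph with no proper 3-edge-colouring. -/
def IsSnark {V : Type} (G : SimpleGraph V) : Prop := G.Connected ∧ IsCubic G ∧ ¬ Colourable3 G

/-- `S` is a cycle-separating set of edges of `G`: at least two components of `G - S`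
contain a cycle. -/
def CycleSeparating {V : Type} (G : SimpleGraph V) (S : Set (Sym2 V)) : Prop :=
  S ⊆ G.edgeSet ∧ ∃ (u v : V) (p : (G.deleteEdges S).Walk u u) (q : (G.deleteEdges S).Walk v v),
    p.IsCycle ∧ q.IsCycle ∧ ¬ (G.deleteEdges S).Reachable u v

/-- `G` is cyclically `k`-edge-connected: no set of fewer than `k` edges is cycle-separating. -/
def CyclicallyEdgeConnected {V : Type} (G : SimpleGraph V) (k : ℕ) : Prop :=
  ∀ S : Set (Sym2 V), Nat.card S < k → ¬ CycleSeparating G S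

/-- The cycle rank `β(G) = |E(G)| - |V(G)| + 1`. -/
noncomputable def cycleRank {V : Type} (G : SimpleGraph V) : ℕ :=
  Nat.card G.edgeSet + 1 - Nat.card V

/-- The cyclic connectivity: the largest `k ≤ β(G)` such that `G` is cyclically
`k`-edge-connected. -/
noncomputable def cyclicConnectivity {V : Type} (G : SimpleGraph V) : ℕ :=
  sSup {k : ℕ | k ≤ cycleRank G ∧ CyclicallyEdgeConnected G k}

/-- `H` is a 2-factor of `G`: a spanning 2-regular subgraph. -/
def IsTwoFactor {V : Type} (G H : SimpleGraph V) : Prop :=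
  H ≤ G ∧ ∀ v, Nat.card (H.neighborSet v) = 2

/-- The number of connected components of `H` with an odd number of vertices. -/
noncomputable def oddComponents {V : Type} (H : SimpleGraph V) : ℕ :=
  Nat.card {c : H.ConnectedComponent // Odd (Nat.card c.supp)}

/-- The oddness of `G`: the minimum number of odd components over all 2-factors of `G`. -/
noncomputable def oddness {V : Type} (G : SimpleGraph V) : ℕ :=
  sInf {m : ℕ | ∃ H, IsTwoFactor G H ∧ _root_.oddComponents H = m}

/-- The set of edges of `G` with exactly one endpoint in `A`. -/
def edgeBoundary {V : Type} (G : SimpleGraph V) (A : Set V) : Set (Sym2 V) :=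
  {e | e ∈ G.edgeSet ∧ ∃ u v, e = s(u, v) ∧ u ∈ A ∧ v ∉ A}

/-- A graph is bridgeless if no edge is a bridge. -/
def Bridgeless {V : Type} (G : SimpleGraph V) : Prop := ∀ e, ¬ G.IsBridge e

/-- The resistance of `G`: the minimum number of edges to delete to obtain a
3-edge-colourable graph. -/
noncomputable def resistance {V : Type} (G : SimpleGraph V) : ℕ :=
  sInf {n : ℕ | ∃ F : Set (Sym2 V), F ⊆ G.edgeSet ∧ Nat.card F = n ∧
    Colourable3 (G.deleteEdges F)}

section MyAux
open Finset
set_option linter.unusedSectionVars false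

lemma natCard_subtype' {α : Type*} [Fintype α] (p : α → Prop) [DecidablePred p] :
    Nat.card {x // p x} = (Finset.univ.filter p).card := by
  rw [Nat.card_eq_fintype_card]; exact Fintype.card_subtype p

lemma fin4_cover : ∀ i j k x y : Fin 4, i ≠ 0 → j ≠ 0 → k ≠ 0 → j ≠ i → k ≠ i → j ≠ k →
    x ≠ 0 → y ≠ 0 → x ≠ y →
    ((i ≠ x ∧ i ≠ y) ∨ (j ≠ x ∧ j ≠ y) ∨ (k ≠ x ∧ k ≠ y)) := by decide

lemma fin4_classify : ∀ a b d x y : Fin 4, a ≠ 0 → b ≠ 0 → d ≠ 0 → b ≠ a → d ≠ a → b ≠ d →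
    x ≠ 0 → y ≠ 0 → x ≠ y → a ≠ x → a ≠ y →
    ((x = b ∧ y = d) ∨ (x = d ∧ y = b)) := by decide

lemma card_filter_pair {α : Type*} [DecidableEq α] (P : α → Prop) [DecidablePred P]
    {a b : α} (hab : a ≠ b) :
    (({a, b} : Finset α).filter P).card =
      (if P a then 1 else 0) + (if P b then 1 else 0) := by
  by_cases ha : P a <;> by_cases hb : P b <;>
    simp [Finset.filter_insert, Finset.filter_singleton, ha, hb, hab]

lemma fin4_count : ∀ j k mv : Fin 4, j ≠ k →
    (Finset.univ.filter (fun a : Fin 4 => (a = j ∨ a = k) ∧ a ≠ mv)).card =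
      if mv = j ∨ mv = k then 1 else 2 := by decide

variable {V : Type} [Fintype V] {G : SimpleGraph V}
variable {c : G.edgeSet → Fin 4}
  (hproper : ∀ e f : G.edgeSet, Sym2Adj (e : Sym2 V) (f : Sym2 V) → c e ≠ c f)

lemma card_inc (hcubic : IsCubic G) (v : V) :
    Nat.card {e : G.edgeSet // v ∈ (e : Sym2 V)} = 3 := by
  classical
  have e1 : {e : G.edgeSet // v ∈ (e : Sym2 V)} ≃ G.incidenceSet v :=
    { toFun := fun x => ⟨x.1, x.1.2, x.2⟩
      invFun := fun x => ⟨⟨x.1, x.2.1⟩, x.2.2⟩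
      left_inv := fun x => rfl
      right_inv := fun x => rfl }
  rw [Nat.card_congr e1, Nat.card_congr (G.incidenceSetEquivNeighborSet v)]
  exact hcubic v

include hproper in
/-- at a vertex, edges of equal colour are equal -/
lemma colour_inj' {v : V} {e f : G.edgeSet} (he : v ∈ (e : Sym2 V)) (hf : v ∈ (f : Sym2 V))
    (hc : c e = c f) : e = f := by
  by_contra hne
  exact hproper e f ⟨fun h => hne (Subtype.coe_injective h), v, he, hf⟩ hc

include hproper in
lemma missing_exists (hcubic : IsCubic G) (v : V) :
    ∃ μ : Fin 4, ∀ j : Fin 4, (j ≠ μ ↔ ∃ e : G.edgeSet, v ∈ (e : Sym2 V) ∧ c e = j) := by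
  classical
  let T : Finset (Fin 4) := Finset.univ.filter
    (fun j => ∃ e : G.edgeSet, v ∈ (e : Sym2 V) ∧ c e = j)
  have hTim : T = Finset.univ.image (fun x : {e : G.edgeSet // v ∈ (e : Sym2 V)} => c x.1) := by
    ext j
    simp only [T, Finset.mem_filter, Finset.mem_image, Finset.mem_univ, true_and]
    constructor
    · rintro ⟨e, he, hc⟩; exact ⟨⟨e, he⟩, hc⟩
    · rintro ⟨⟨e, he⟩, hc⟩; exact ⟨e, he, hc⟩
  have hinj : Function.Injective (fun x : {e : G.edgeSet // v ∈ (e : Sym2 V)} => c x.1) := by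
    intro x y hxy
    exact Subtype.ext (colour_inj' hproper x.2 y.2 hxy)
  have hcard : T.card = 3 := by
    rw [hTim, Finset.card_image_of_injective _ hinj, Finset.card_univ,
      ← Nat.card_eq_fintype_card]
    exact card_inc hcubic v
  have hcc : Tᶜ.card = 1 := by
    have := Finset.card_compl T
    simp [hcard] at this
    omega
  obtain ⟨μ, hμ⟩ := Finset.card_eq_one.mp hcc
  refine ⟨μ, fun j => ?_⟩
  have hmemT : j ∈ T ↔ ¬ j ∈ Tᶜ := by simp
  rw [hμ] at hmemT
  simp only [Finset.mem_singleton] at hmemT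
  constructor
  · intro hj
    have : j ∈ T := hmemT.mpr hj
    simpa [T] using this
  · intro hj
    have hjT : j ∈ T := by simpa [T] using hj
    exact hmemT.mp hjT

include hproper in
lemma missing_ne
    (hmin : ∀ c' : G.edgeSet → Fin 4,
      (∀ e f : G.edgeSet, Sym2Adj (e : Sym2 V) (f : Sym2 V) → c' e ≠ c' f) →
      Nat.card {e : G.edgeSet // c e = 0} ≤ Nat.card {e : G.edgeSet // c' e = 0})
    (μ : V → Fin 4)
    (hμ : ∀ v j, j ≠ μ v ↔ ∃ e : G.edgeSet, v ∈ (e : Sym2 V) ∧ c e = j)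
    {e : G.edgeSet} (he : c e = 0) {v w : V} (hvw : (e : Sym2 V) = s(v, w)) :
    μ v ≠ μ w := by
  classical
  have hv : v ∈ (e : Sym2 V) := by rw [hvw]; simp
  have hw : w ∈ (e : Sym2 V) := by rw [hvw]; simp
  have h0v : (0 : Fin 4) ≠ μ v := (hμ v 0).mpr ⟨e, hv, he⟩
  intro hEq
  set a := μ v with ha
  set c' : G.edgeSet → Fin 4 := Function.update c e a with hc'
  have hupd : ∀ f : G.edgeSet, f ≠ e → c' f = c f := by
    intro f hf; simp [hc', Function.update_of_ne hf]
  have hprop' : ∀ f g : G.edgeSet, Sym2Adj (f : Sym2 V) (g : Sym2 V) → c' f ≠ c' g := by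
    have key : ∀ g : G.edgeSet, g ≠ e → Sym2Adj (e : Sym2 V) (g : Sym2 V) → c g ≠ a := by
      rintro g hg ⟨-, x, hxe, hxg⟩
      have hcg : c g ≠ μ x := fun h => ((hμ x (c g)).mpr ⟨g, hxg, rfl⟩) h
      have hx : x = v ∨ x = w := by rw [hvw] at hxe; exact Sym2.mem_iff.mp hxe
      rcases hx with rfl | rfl
      · exact hcg
      · rw [← hEq] at hcg; exact hcg
    intro f g hadj
    by_cases hf : f = e
    · by_cases hg : g = e
      · exact absurd (congrArg _ (hf.trans hg.symm)) hadj.1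
      · rw [hf] at hadj ⊢
        rw [hupd g hg]
        simp only [hc', Function.update_self]
        exact fun h => key g hg hadj h.symm
    · by_cases hg : g = e
      · rw [hg] at hadj ⊢
        rw [hupd f hf]
        simp only [hc', Function.update_self]
        have hadj' : Sym2Adj ((e : G.edgeSet) : Sym2 V) (f : Sym2 V) :=
          ⟨hadj.1.symm, hadj.2.imp fun x hx => ⟨hx.2, hx.1⟩⟩
        exact key f hf hadj'
      · rw [hupd f hf, hupd g hg]; exact hproper f g hadj
  have hle := hmin c' hprop'
  rw [natCard_subtype' (fun f : G.edgeSet => c f = 0),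
    natCard_subtype' (fun f : G.edgeSet => c' f = 0)] at hle
  have hAA : (Finset.univ.filter (fun f : G.edgeSet => c' f = 0)) =
      (Finset.univ.filter (fun f : G.edgeSet => c f = 0)).erase e := by
    ext f
    simp only [Finset.mem_filter, Finset.mem_univ, true_and, Finset.mem_erase]
    constructor
    · intro hf
      have hfe : f ≠ e := by
        rintro rfl
        rw [hc', Function.update_self] at hf
        exact h0v hf.symm
      rw [hupd f hfe] at hf
      exact ⟨hfe, hf⟩
    · rintro ⟨hfe, hf⟩
      rw [hupd f hfe]; exact hf
  rw [hAA, Finset.card_erase_of_mem (by simp [he])] at hle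
  have hpos : 0 < (Finset.univ.filter (fun f : G.edgeSet => c f = 0)).card :=
    Finset.card_pos.mpr ⟨e, by simp [he]⟩
  omega

include hproper in
lemma class_iff (μ : V → Fin 4)
    (hμ : ∀ v j, j ≠ μ v ↔ ∃ e : G.edgeSet, v ∈ (e : Sym2 V) ∧ c e = j)
    {e : G.edgeSet} (he : c e = 0) {v w : V} (hvw : (e : Sym2 V) = s(v, w)) (hne : v ≠ w)
    {i : Fin 4} (hi : i ≠ 0) :
    (∃ f g : G.edgeSet, f ≠ g ∧ Sym2Adj (e : Sym2 V) (f : Sym2 V) ∧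
        Sym2Adj (e : Sym2 V) (g : Sym2 V) ∧ c f = i ∧ c g = i) ↔ (i ≠ μ v ∧ i ≠ μ w) := by
  constructor
  · rintro ⟨f, g, hfg, ⟨-, x, hxe, hxf⟩, ⟨-, y, hye, hyg⟩, hcf, hcg⟩
    have hxy : x ≠ y := by
      rintro rfl
      exact hfg (colour_inj' hproper hxf hyg (hcf.trans hcg.symm))
    have hx' : i ≠ μ x := (hμ x i).mpr ⟨f, hxf, hcf⟩
    have hy' : i ≠ μ y := (hμ y i).mpr ⟨g, hyg, hcg⟩
    rw [hvw] at hxe hye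
    rcases Sym2.mem_iff.mp hxe with rfl | rfl <;> rcases Sym2.mem_iff.mp hye with rfl | rfl
    · exact absurd rfl hxy
    · exact ⟨hx', hy'⟩
    · exact ⟨hy', hx'⟩
    · exact absurd rfl hxy
  · rintro ⟨h1, h2⟩
    obtain ⟨f, hvf, hcf⟩ := (hμ v i).mp h1
    obtain ⟨g, hwg, hcg⟩ := (hμ w i).mp h2
    have hfe : f ≠ e := by rintro rfl; exact hi (hcf.symm.trans he)
    have hge : g ≠ e := by rintro rfl; exact hi (hcg.symm.trans he)
    have hfg : f ≠ g := by
      rintro rfl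
      have : (f : Sym2 V) = s(v, w) := (Sym2.mem_and_mem_iff hne).mp ⟨hvf, hwg⟩
      exact hfe (Subtype.ext (this.trans hvw.symm))
    refine ⟨f, g, hfg, ⟨fun h => hfe (Subtype.ext h.symm), v, by rw [hvw]; simp, hvf⟩,
      ⟨fun h => hge (Subtype.ext h.symm), w, by rw [hvw]; simp, hwg⟩, hcf, hcg⟩

end MyAux

/-- in a minimum proper 4-edge-colouring of a connected cubic graph
(minimizing the number of edges coloured 0), the number `m_i` of edges coloured 0 adjacent
to two edges coloured `i` satisfies `m_i ≡ m (mod 2)` for each nonzero colour `i`,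
where `m` is the number of edges coloured 0. -/
theorem stmt_9 {V : Type} [Fintype V] (G : SimpleGraph V)
    (hconn : G.Connected) (hcubic : IsCubic G)
    (c : G.edgeSet → Fin 4)
    (hproper : ∀ e f : G.edgeSet, Sym2Adj (e : Sym2 V) (f : Sym2 V) → c e ≠ c f)
    (hmin : ∀ c' : G.edgeSet → Fin 4,
      (∀ e f : G.edgeSet, Sym2Adj (e : Sym2 V) (f : Sym2 V) → c' e ≠ c' f) →
      Nat.card {e : G.edgeSet // c e = 0} ≤ Nat.card {e : G.edgeSet // c' e = 0})
    (m : ℕ) (hm : m = Nat.card {e : G.edgeSet // c e = 0})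
    (mi : Fin 4 → ℕ)
    (hmi : ∀ i : Fin 4, mi i = Nat.card {e : G.edgeSet // c e = 0 ∧
      ∃ f g : G.edgeSet, f ≠ g ∧ Sym2Adj (e : Sym2 V) (f : Sym2 V) ∧
        Sym2Adj (e : Sym2 V) (g : Sym2 V) ∧ c f = i ∧ c g = i}) :
    ∀ i : Fin 4, i ≠ 0 → mi i ≡ m [MOD 2] := by
  classical
  intro i hi
  -- endpoints of edges
  have hends : ∀ z : Sym2 V, ∃ v w : V, z = s(v, w) := Sym2.ind fun v w => ⟨v, w, rfl⟩
  choose p q hpq using fun e : G.edgeSet => hends (e : Sym2 V)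
  have hadjpq : ∀ e : G.edgeSet, G.Adj (p e) (q e) := by
    intro e
    rw [← G.mem_edgeSet, ← hpq e]
    exact e.2
  have hpq_ne : ∀ e : G.edgeSet, p e ≠ q e := fun e => (hadjpq e).ne
  have hpmem : ∀ e : G.edgeSet, p e ∈ (e : Sym2 V) := fun e => by rw [hpq e]; simp
  have hqmem : ∀ e : G.edgeSet, q e ∈ (e : Sym2 V) := fun e => by rw [hpq e]; simp
  -- missing colour function
  choose μ hμ using fun v : V => missing_exists hproper hcubic v
  have hμ0 : ∀ (x : V) (e : G.edgeSet), x ∈ (e : Sym2 V) → c e = 0 → μ x ≠ 0 :=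
    fun x e hx he h => ((hμ x 0).mpr ⟨e, hx, he⟩) h.symm
  have hdist : ∀ e : G.edgeSet, c e = 0 → μ (p e) ≠ μ (q e) :=
    fun e he => missing_ne hproper hmin μ hμ he (hpq e)
  have huniq : ∀ (x : V) (e f : G.edgeSet), x ∈ (e : Sym2 V) → x ∈ (f : Sym2 V) →
      c e = 0 → c f = 0 → e = f :=
    fun x e f hxe hxf he hf => colour_inj' hproper hxe hxf (he.trans hf.symm)
  -- the other two nonzero colours
  obtain ⟨j, k, hj0, hk0, hji, hki, hjk, hall⟩ :
      ∃ j k : Fin 4, j ≠ 0 ∧ k ≠ 0 ∧ j ≠ i ∧ k ≠ i ∧ j ≠ k ∧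
        ∀ a : Fin 4, a ≠ 0 → a ≠ i → (a = j ∨ a = k) := by
    fin_cases i
    · exact absurd rfl hi
    · exact ⟨2, 3, by decide, by decide, by decide, by decide, by decide, by decide⟩
    · exact ⟨1, 3, by decide, by decide, by decide, by decide, by decide, by decide⟩
    · exact ⟨1, 2, by decide, by decide, by decide, by decide, by decide, by decide⟩
  -- the finsets of 0-edges and the three classes
  set Z : Finset G.edgeSet := Finset.univ.filter (fun e => c e = 0) with hZ
  have hZmem : ∀ e : G.edgeSet, e ∈ Z ↔ c e = 0 := by intro e; simp [hZ]
  set cond : Fin 4 → G.edgeSet → Prop := fun a e => a ≠ μ (p e) ∧ a ≠ μ (q e) with hcond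
  set Ci : Finset G.edgeSet := Z.filter (cond i) with hCi
  set Cj : Finset G.edgeSet := Z.filter (cond j) with hCj
  set Ck : Finset G.edgeSet := Z.filter (cond k) with hCk
  have hmZ : m = Z.card := by
    rw [hm, natCard_subtype' (fun e : G.edgeSet => c e = 0)]
  have hmiC : mi i = Ci.card := by
    rw [hmi i, natCard_subtype']
    congr 1
    ext e
    simp only [Finset.mem_filter, Finset.mem_univ, true_and, hCi, hZmem]
    constructor
    · rintro ⟨he, hcl⟩
      exact ⟨he, (class_iff hproper μ hμ he (hpq e) (hpq_ne e) hi).mp hcl⟩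
    · rintro ⟨he, hcl⟩
      exact ⟨he, (class_iff hproper μ hμ he (hpq e) (hpq_ne e) hi).mpr hcl⟩
  -- classification facts
  have hclassI : ∀ e ∈ Ci, (μ (p e) = j ∧ μ (q e) = k) ∨ (μ (p e) = k ∧ μ (q e) = j) := by
    intro e he
    rw [hCi, Finset.mem_filter] at he
    obtain ⟨heZ, h1, h2⟩ := he
    have he0 := (hZmem e).mp heZ
    exact fin4_classify i j k (μ (p e)) (μ (q e)) hi hj0 hk0 hji hki hjk
      (hμ0 _ e (hpmem e) he0) (hμ0 _ e (hqmem e) he0) (hdist e he0) h1 h2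
  have hclassJ : ∀ e ∈ Cj, (μ (p e) = i ∧ μ (q e) = k) ∨ (μ (p e) = k ∧ μ (q e) = i) := by
    intro e he
    rw [hCj, Finset.mem_filter] at he
    obtain ⟨heZ, h1, h2⟩ := he
    have he0 := (hZmem e).mp heZ
    exact fin4_classify j i k (μ (p e)) (μ (q e)) hj0 hi hk0 hji.symm hjk.symm hki.symm
      (hμ0 _ e (hpmem e) he0) (hμ0 _ e (hqmem e) he0) (hdist e he0) h1 h2
  have hclassK : ∀ e ∈ Ck, (μ (p e) = i ∧ μ (q e) = j) ∨ (μ (p e) = j ∧ μ (q e) = i) := by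
    intro e he
    rw [hCk, Finset.mem_filter] at he
    obtain ⟨heZ, h1, h2⟩ := he
    have he0 := (hZmem e).mp heZ
    exact fin4_classify k i j (μ (p e)) (μ (q e)) hk0 hi hj0 hki.symm hjk hji.symm
      (hμ0 _ e (hpmem e) he0) (hμ0 _ e (hqmem e) he0) (hdist e he0) h1 h2
  -- disjointness
  have hdisjij : Disjoint Ci Cj := by
    rw [Finset.disjoint_left]
    intro e hei hej
    rcases hclassI e hei with ⟨h1, h2⟩ | ⟨h1, h2⟩ <;>
      · rw [hCj, Finset.mem_filter] at hej
        rcases hej with ⟨-, hj1, hj2⟩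
        first
          | exact hj1 h1.symm
          | exact hj2 h2.symm
  have hdisjik : Disjoint Ci Ck := by
    rw [Finset.disjoint_left]
    intro e hei hek
    rcases hclassI e hei with ⟨h1, h2⟩ | ⟨h1, h2⟩ <;>
      · rw [hCk, Finset.mem_filter] at hek
        rcases hek with ⟨-, hk1, hk2⟩
        first
          | exact hk1 h1.symm
          | exact hk2 h2.symm
  have hdisjjk : Disjoint Cj Ck := by
    rw [Finset.disjoint_left]
    intro e hej hek
    rcases hclassJ e hej with ⟨h1, h2⟩ | ⟨h1, h2⟩ <;>
      · rw [hCk, Finset.mem_filter] at hek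
        rcases hek with ⟨-, hk1, hk2⟩
        first
          | exact hk1 h1.symm
          | exact hk2 h2.symm
  have hdisj : Disjoint Ci (Cj ∪ Ck) := by
    rw [Finset.disjoint_union_right]; exact ⟨hdisjij, hdisjik⟩
  -- cover
  have hZeq : Z = Ci ∪ (Cj ∪ Ck) := by
    ext e
    simp only [Finset.mem_union, hCi, hCj, hCk, Finset.mem_filter]
    constructor
    · intro heZ
      have he0 := (hZmem e).mp heZ
      rcases fin4_cover i j k (μ (p e)) (μ (q e)) hi hj0 hk0 hji hki hjk
        (hμ0 _ e (hpmem e) he0) (hμ0 _ e (hqmem e) he0) (hdist e he0) with h | h | h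
      · exact Or.inl ⟨heZ, h⟩
      · exact Or.inr (Or.inl ⟨heZ, h⟩)
      · exact Or.inr (Or.inr ⟨heZ, h⟩)
    · rintro (⟨h, -⟩ | ⟨h, -⟩ | ⟨h, -⟩) <;> exact h
  have hZcard : Z.card = Ci.card + (Cj.card + Ck.card) := by
    rw [hZeq, Finset.card_union_of_disjoint hdisj, Finset.card_union_of_disjoint hdisjjk]
  -- the vertex set D
  set D : Finset V := Finset.univ.filter (fun v => μ v = j ∨ μ v = k) with hD
  -- choose the 0-edge at each vertex with nonzero missing colour
  have hEne : Nonempty G.edgeSet := by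
    obtain ⟨v0⟩ := hconn.nonempty
    have h3 : Nat.card (G.neighborSet v0) ≠ 0 := by rw [hcubic v0]; omega
    obtain ⟨⟨w, hw⟩, -⟩ := Nat.card_ne_zero.mp h3
    exact ⟨⟨s(v0, w), (G.mem_edgeSet).mpr hw⟩⟩
  have hhex : ∀ v : V, ∃ e : G.edgeSet, μ v ≠ 0 → (c e = 0 ∧ v ∈ (e : Sym2 V)) := by
    intro v
    by_cases hv : μ v = 0
    · exact ⟨Classical.arbitrary _, fun h => absurd hv h⟩
    · obtain ⟨e, hve, hce⟩ := (hμ v 0).mp (fun h => hv h.symm)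
      exact ⟨e, fun _ => ⟨hce, hve⟩⟩
  choose h hh using hhex
  -- D.card as a sum of fibers over Z
  have hmapZ : ∀ v ∈ D, h v ∈ Z := by
    intro v hv
    rw [hD, Finset.mem_filter] at hv
    have hv0 : μ v ≠ 0 := by rcases hv.2 with h' | h' <;> rw [h'] <;> assumption
    exact (hZmem _).mpr ((hh v hv0).1)
  have hDsum : D.card = ∑ e ∈ Z, (D.filter (fun v => h v = e)).card :=
    Finset.card_eq_sum_card_fiberwise hmapZ
  -- fibers
  have hfiber : ∀ e ∈ Z, D.filter (fun v => h v = e) =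
      ({p e, q e} : Finset V).filter (fun v => μ v = j ∨ μ v = k) := by
    intro e heZ
    have he0 := (hZmem e).mp heZ
    ext v
    simp only [hD, Finset.mem_filter, Finset.mem_univ, true_and, Finset.mem_insert,
      Finset.mem_singleton]
    constructor
    · rintro ⟨hvjk, hve⟩
      have hv0 : μ v ≠ 0 := by rcases hvjk with h' | h' <;> rw [h'] <;> assumption
      have hvmem : v ∈ (e : Sym2 V) := by rw [← hve]; exact (hh v hv0).2
      rw [hpq e] at hvmem
      exact ⟨Sym2.mem_iff.mp hvmem, hvjk⟩
    · rintro ⟨hvp, hvjk⟩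
      have hv0 : μ v ≠ 0 := by rcases hvjk with h' | h' <;> rw [h'] <;> assumption
      have hvmem : v ∈ (e : Sym2 V) := by
        rw [hpq e]; rcases hvp with rfl | rfl <;> simp
      exact ⟨hvjk, huniq v (h v) e (hh v hv0).2 hvmem (hh v hv0).1 he0⟩
  -- fiber cardinalities per class
  have hfibI : ∀ e ∈ Ci, (D.filter (fun v => h v = e)).card = 2 := by
    intro e he
    have heZ : e ∈ Z := (Finset.filter_subset _ _) he
    rw [hfiber e heZ, card_filter_pair _ (hpq_ne e)]
    rcases hclassI e he with ⟨h1, h2⟩ | ⟨h1, h2⟩ <;> simp [h1, h2]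
  have hfibJ : ∀ e ∈ Cj, (D.filter (fun v => h v = e)).card = 1 := by
    intro e he
    have heZ : e ∈ Z := (Finset.filter_subset _ _) he
    rw [hfiber e heZ, card_filter_pair _ (hpq_ne e)]
    rcases hclassJ e he with ⟨h1, h2⟩ | ⟨h1, h2⟩ <;>
      simp [h1, h2, hji, hki, Ne.symm hji, Ne.symm hki]
  have hfibK : ∀ e ∈ Ck, (D.filter (fun v => h v = e)).card = 1 := by
    intro e he
    have heZ : e ∈ Z := (Finset.filter_subset _ _) he
    rw [hfiber e heZ, card_filter_pair _ (hpq_ne e)]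
    rcases hclassK e he with ⟨h1, h2⟩ | ⟨h1, h2⟩ <;>
      simp [h1, h2, hji, hki, Ne.symm hji, Ne.symm hki]
  have hDcard : D.card = 2 * Ci.card + (Cj.card + Ck.card) := by
    rw [hDsum, hZeq, Finset.sum_union hdisj, Finset.sum_union hdisjjk,
      Finset.sum_congr rfl hfibI, Finset.sum_congr rfl hfibJ, Finset.sum_congr rfl hfibK]
    simp [Finset.sum_const, mul_comm]
  -- handshake: D.card is even
  have hDmod : D.card % 2 = 0 := by
    set Ejk : Finset G.edgeSet := Finset.univ.filter (fun e => c e = j ∨ c e = k) with hEjk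
    set P : Finset (V × G.edgeSet) := Finset.univ.filter
      (fun x => x.1 ∈ (x.2 : Sym2 V) ∧ (c x.2 = j ∨ c x.2 = k)) with hP
    have hPE : P.card = 2 * Ejk.card := by
      have hmap : ∀ x ∈ P, x.2 ∈ Ejk := by
        intro x hx
        rw [hP, Finset.mem_filter] at hx
        rw [hEjk, Finset.mem_filter]
        exact ⟨Finset.mem_univ _, hx.2.2⟩
      rw [Finset.card_eq_sum_card_fiberwise hmap]
      have : ∀ e ∈ Ejk, (P.filter (fun x => x.2 = e)).card = 2 := by
        intro e he
        rw [hEjk, Finset.mem_filter] at he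
        have : P.filter (fun x => x.2 = e) = {(p e, e), (q e, e)} := by
          ext ⟨a, f⟩
          simp only [hP, Finset.mem_filter, Finset.mem_univ, true_and, Finset.mem_insert,
            Finset.mem_singleton, Prod.mk.injEq]
          constructor
          · rintro ⟨⟨haf, -⟩, rfl⟩
            rw [hpq f] at haf
            rcases Sym2.mem_iff.mp haf with rfl | rfl
            · exact Or.inl ⟨rfl, rfl⟩
            · exact Or.inr ⟨rfl, rfl⟩
          · rintro (⟨ha, hfe⟩ | ⟨ha, hfe⟩)
            · exact ⟨⟨by rw [ha, hfe]; exact hpmem e, by rw [hfe]; exact he.2⟩, hfe⟩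
            · exact ⟨⟨by rw [ha, hfe]; exact hqmem e, by rw [hfe]; exact he.2⟩, hfe⟩
        rw [this]
        rw [Finset.card_insert_of_notMem (by simp [hpq_ne e]), Finset.card_singleton]
      rw [Finset.sum_congr rfl this, Finset.sum_const, smul_eq_mul, mul_comm]
    have hPV : P.card = ∑ v : V, ((Finset.univ.filter
        (fun e : G.edgeSet => v ∈ (e : Sym2 V) ∧ (c e = j ∨ c e = k))).card) := by
      have hmap : ∀ x ∈ P, x.1 ∈ (Finset.univ : Finset V) := fun x _ => Finset.mem_univ _
      rw [Finset.card_eq_sum_card_fiberwise hmap]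
      refine Finset.sum_congr rfl fun v _ => ?_
      have : P.filter (fun x => x.1 = v) = (Finset.univ.filter
          (fun e : G.edgeSet => v ∈ (e : Sym2 V) ∧ (c e = j ∨ c e = k))).image
            (fun e => (v, e)) := by
        ext ⟨a, f⟩
        simp only [hP, Finset.mem_filter, Finset.mem_univ, true_and, Finset.mem_image,
          Prod.mk.injEq]
        constructor
        · rintro ⟨⟨haf, hcf⟩, rfl⟩
          exact ⟨f, ⟨haf, hcf⟩, rfl, rfl⟩
        · rintro ⟨e, ⟨hae, hce⟩, rfl, rfl⟩
          exact ⟨⟨hae, hce⟩, rfl⟩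
      rw [this, Finset.card_image_of_injective _ (fun a b hab => by
        simpa using congrArg Prod.snd hab)]
    -- compute the local degree
    have hdeg : ∀ v : V, (Finset.univ.filter
        (fun e : G.edgeSet => v ∈ (e : Sym2 V) ∧ (c e = j ∨ c e = k))).card =
        (Finset.univ.filter (fun a : Fin 4 => (a = j ∨ a = k) ∧ a ≠ μ v)).card := by
      intro v
      have hinj : Set.InjOn c ((Finset.univ.filter
          (fun e : G.edgeSet => v ∈ (e : Sym2 V) ∧ (c e = j ∨ c e = k))) : Set G.edgeSet) := by
        intro x hx y hy hxy
        simp only [Finset.coe_filter, Set.mem_setOf_eq] at hx hy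
        exact colour_inj' hproper hx.2.1 hy.2.1 hxy
      rw [← Finset.card_image_of_injOn hinj]
      congr 1
      ext a
      simp only [Finset.mem_image, Finset.mem_filter, Finset.mem_univ, true_and]
      constructor
      · rintro ⟨e, ⟨hve, hce⟩, rfl⟩
        exact ⟨hce, fun hmu => ((hμ v (c e)).mpr ⟨e, hve, rfl⟩) hmu⟩
      · rintro ⟨hajk, hane⟩
        obtain ⟨e, hve, hce⟩ := (hμ v a).mp hane
        exact ⟨e, ⟨hve, by rw [hce]; exact hajk⟩, hce⟩
    have hfin4 : ∀ mv : Fin 4, (Finset.univ.filter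
        (fun a : Fin 4 => (a = j ∨ a = k) ∧ a ≠ mv)).card =
        if mv = j ∨ mv = k then 1 else 2 := fun mv => fin4_count j k mv hjk
    have hsplit : ∑ v : V, ((Finset.univ.filter
        (fun e : G.edgeSet => v ∈ (e : Sym2 V) ∧ (c e = j ∨ c e = k))).card)
        = D.card + 2 * (Finset.univ.filter (fun v => ¬(μ v = j ∨ μ v = k))).card := by
      rw [← Finset.sum_filter_add_sum_filter_not Finset.univ (fun v => μ v = j ∨ μ v = k)]
      congr 1
      · rw [hD, Finset.card_eq_sum_ones]
        refine Finset.sum_congr rfl fun v hv => ?_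
        rw [Finset.mem_filter] at hv
        rw [hdeg v, hfin4 (μ v), if_pos hv.2]
      · have hconst : ∀ v ∈ Finset.univ.filter (fun v => ¬(μ v = j ∨ μ v = k)),
            (Finset.univ.filter
              (fun e : G.edgeSet => v ∈ (e : Sym2 V) ∧ (c e = j ∨ c e = k))).card = 2 := by
          intro v hv
          rw [Finset.mem_filter] at hv
          rw [hdeg v, hfin4 (μ v), if_neg hv.2]
        rw [Finset.sum_congr rfl hconst, Finset.sum_const, smul_eq_mul, mul_comm]
    omega
  -- conclude
  show mi i % 2 = m % 2
  omega
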